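/- Let K be an algebraically closed field and k ≥ 1. If X = (V₁, V₂, α, β, η) is a finite-dimensional Γ_con-module whose endomorphism space (the K-vector space of morphisms X → X) is one-dimensional, then X is isomorphic as a representation to exactly one of the four modules S₁ = (K, 0), S₂ = (0, K), M₁ = (K, K, α = id, β = 0, η = 0), M₂ = (K, K, α = 0, β = id, η = 0). In particular Γ_con has exactly four bricks. -/

import Mathlib

/-- A finite-dimensional module over the contraction algebra `Γ_con` (the path algebra of
the quiver with two vertices, arrows `a : 1 → 2`, `b : 2 → 1` and a loop `y` at vertex `2`,
modulo `y^k = ba`, `ay = 0`, `yb = 0`), given concretely as a representation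
`(V₁, V₂, α, β, η)` with `α ∘ β = η^k`, `η ∘ α = 0` and `β ∘ η = 0`. -/
structure GamRep (K : Type) [Field K] (k : ℕ) : Type 1 where
  V1 : Type
  V2 : Type
  [acg1 : AddCommGroup V1]
  [acg2 : AddCommGroup V2]
  [mod1 : Module K V1]
  [mod2 : Module K V2]
  [fd1 : FiniteDimensional K V1]
  [fd2 : FiniteDimensional K V2]
  α : V1 →ₗ[K] V2
  β : V2 →ₗ[K] V1
  η : V2 →ₗ[K] V2
  rel1 : α ∘ₗ β = η ^ k
  rel2 : η ∘ₗ α = 0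
  rel3 : β ∘ₗ η = 0

attribute [instance] GamRep.acg1 GamRep.acg2 GamRep.mod1 GamRep.mod2 GamRep.fd1 GamRep.fd2

namespace GamRep

variable {K : Type} [Field K] {k : ℕ}

/-- A morphism of `Γ_con`-modules is a pair of linear maps commuting with the three
structure maps. -/
def IsHom (M N : GamRep K k) (φ1 : M.V1 →ₗ[K] N.V1) (φ2 : M.V2 →ₗ[K] N.V2) : Prop :=
  φ2 ∘ₗ M.α = N.α ∘ₗ φ1 ∧ φ1 ∘ₗ M.β = N.β ∘ₗ φ2 ∧ φ2 ∘ₗ M.η = N.η ∘ₗ φ2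

/-- An isomorphism of `Γ_con`-modules is a pair of linear isomorphisms commuting with the
structure maps. -/
def Iso (M N : GamRep K k) : Prop :=
  ∃ (φ1 : M.V1 ≃ₗ[K] N.V1) (φ2 : M.V2 ≃ₗ[K] N.V2),
    M.IsHom N (φ1 : M.V1 →ₗ[K] N.V1) (φ2 : M.V2 →ₗ[K] N.V2)

/-- The zero representation: both underlying vector spaces are trivial. -/
def IsZero (M : GamRep K k) : Prop := Subsingleton M.V1 ∧ Subsingleton M.V2

theorem prodMap_pow {V W : Type} [AddCommGroup V] [Module K V] [AddCommGroup W] [Module K W]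
    (f : V →ₗ[K] V) (g : W →ₗ[K] W) (n : ℕ) :
    (f.prodMap g) ^ n = (f ^ n).prodMap (g ^ n) := by
  induction n with
  | zero => ext <;> simp
  | succ n ih => rw [pow_succ, pow_succ, pow_succ, ih, LinearMap.prodMap_mul]

/-- The direct sum of two representations, taken componentwise. -/
def dsum (M N : GamRep K k) : GamRep K k where
  V1 := M.V1 × N.V1
  V2 := M.V2 × N.V2
  α := M.α.prodMap N.α
  β := M.β.prodMap N.β
  η := M.η.prodMap N.η
  rel1 := by
    rw [show (M.α.prodMap N.α) ∘ₗ (M.β.prodMap N.β) = (M.α ∘ₗ M.β).prodMap (N.α ∘ₗ N.β) from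
      LinearMap.prodMap_comp _ _ _ _, M.rel1, N.rel1, prodMap_pow]
  rel2 := by
    rw [show (M.η.prodMap N.η) ∘ₗ (M.α.prodMap N.α) = (M.η ∘ₗ M.α).prodMap (N.η ∘ₗ N.α) from
      LinearMap.prodMap_comp _ _ _ _, M.rel2, N.rel2, LinearMap.prodMap_zero]
  rel3 := by
    rw [show (M.β.prodMap N.β) ∘ₗ (M.η.prodMap N.η) = (M.β ∘ₗ M.η).prodMap (N.β ∘ₗ N.η) from
      LinearMap.prodMap_comp _ _ _ _, M.rel3, N.rel3, LinearMap.prodMap_zero]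

/-- A representation is indecomposable if it is nonzero and not isomorphic to a direct sum
of two nonzero representations. -/
def Indecomposable (M : GamRep K k) : Prop :=
  ¬ M.IsZero ∧ ∀ N P : GamRep K k, M.Iso (N.dsum P) → N.IsZero ∨ P.IsZero

/-- The endomorphism space of a representation, as a `K`-subspace of the product of the two
spaces of linear endomorphisms. -/
def endSpace (M : GamRep K k) :
    Submodule K ((M.V1 →ₗ[K] M.V1) × (M.V2 →ₗ[K] M.V2)) where
  carrier := {φ | M.IsHom M φ.1 φ.2}
  zero_mem' := by
    refine ⟨?_, ?_, ?_⟩ <;> simp [LinearMap.zero_comp, LinearMap.comp_zero]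
  add_mem' := by
    rintro φ ψ ⟨h1, h2, h3⟩ ⟨h4, h5, h6⟩
    refine ⟨?_, ?_, ?_⟩
    · simp only [Prod.fst_add, Prod.snd_add, LinearMap.add_comp, LinearMap.comp_add, h1, h4]
    · simp only [Prod.fst_add, Prod.snd_add, LinearMap.add_comp, LinearMap.comp_add, h2, h5]
    · simp only [Prod.fst_add, Prod.snd_add, LinearMap.add_comp, LinearMap.comp_add, h3, h6]
  smul_mem' := by
    rintro c φ ⟨h1, h2, h3⟩
    refine ⟨?_, ?_, ?_⟩
    · simp only [Prod.smul_fst, Prod.smul_snd, LinearMap.smul_comp, LinearMap.comp_smul, h1]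
    · simp only [Prod.smul_fst, Prod.smul_snd, LinearMap.smul_comp, LinearMap.comp_smul, h2]
    · simp only [Prod.smul_fst, Prod.smul_snd, LinearMap.smul_comp, LinearMap.comp_smul, h3]

variable (K)

/-- The simple module `S₁ = (K, 0)` with all structure maps zero (a representation whenever
`k ≥ 1`). -/
def S1 (hk : 1 ≤ k) : GamRep K k where
  V1 := K
  V2 := PUnit
  α := 0
  β := 0
  η := 0
  rel1 := by rw [LinearMap.zero_comp, zero_pow (Nat.one_le_iff_ne_zero.mp hk)]
  rel2 := by rw [LinearMap.comp_zero]
  rel3 := by rw [LinearMap.comp_zero]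

/-- The simple module `S₂ = (0, K)` with all structure maps zero (a representation whenever
`k ≥ 1`). -/
def S2 (hk : 1 ≤ k) : GamRep K k where
  V1 := PUnit
  V2 := K
  α := 0
  β := 0
  η := 0
  rel1 := by rw [LinearMap.zero_comp, zero_pow (Nat.one_le_iff_ne_zero.mp hk)]
  rel2 := by rw [LinearMap.comp_zero]
  rel3 := by rw [LinearMap.comp_zero]

/-- The module `M₁ = (K, K, α = id, β = 0, η = 0)` (a representation whenever `k ≥ 1`). -/
def M1 (hk : 1 ≤ k) : GamRep K k where
  V1 := K
  V2 := K
  α := LinearMap.id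
  β := 0
  η := 0
  rel1 := by rw [LinearMap.comp_zero, zero_pow (Nat.one_le_iff_ne_zero.mp hk)]
  rel2 := by rw [LinearMap.zero_comp]
  rel3 := by rw [LinearMap.comp_zero]

/-- The module `M₂ = (K, K, α = 0, β = id, η = 0)` (a representation whenever `k ≥ 1`). -/
def M2 (hk : 1 ≤ k) : GamRep K k where
  V1 := K
  V2 := K
  α := 0
  β := LinearMap.id
  η := 0
  rel1 := by rw [LinearMap.zero_comp, zero_pow (Nat.one_le_iff_ne_zero.mp hk)]
  rel2 := by rw [LinearMap.comp_zero]
  rel3 := by rw [LinearMap.comp_zero]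

end GamRep

open Module

namespace GamRep

variable {K : Type} [Field K] {k : ℕ}

lemma exists_dual_fun {V : Type} [AddCommGroup V] [Module K V] (W : Submodule K V)
    {v : V} (hv : v ∉ W) : ∃ f : V →ₗ[K] K, (∀ w ∈ W, f w = 0) ∧ f v = 1 := by
  have hq : (W.mkQ v : V ⧸ W) ≠ 0 := by
    simpa [Submodule.Quotient.mk_eq_zero] using hv
  obtain ⟨g, hg⟩ := LinearMap.exists_leftInverse_of_injective
    (LinearMap.toSpanSingleton K (V ⧸ W) (W.mkQ v))
    (LinearMap.ker_toSpanSingleton K hq)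
  refine ⟨g ∘ₗ W.mkQ, fun w hw => ?_, ?_⟩
  · simp [Submodule.mkQ_apply, (Submodule.Quotient.mk_eq_zero W).mpr hw]
  · have := congrArg (fun h => h (1 : K)) (congrArg DFunLike.coe hg)
    simpa [LinearMap.toSpanSingleton_apply] using this

lemma exists_dual_fun' {V : Type} [AddCommGroup V] [Module K V] {v : V} (hv : v ≠ 0) :
    ∃ f : V →ₗ[K] K, f v = 1 := by
  obtain ⟨f, _, hf⟩ := exists_dual_fun (⊥ : Submodule K V) (by simpa using hv)
  exact ⟨f, hf⟩

lemma finrank_one_of_scalar {V : Type} [AddCommGroup V] [Module K V]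
    (hnt : ¬ Subsingleton V)
    (h : ∀ φ : V →ₗ[K] V, ∃ c : K, φ = c • LinearMap.id) : finrank K V = 1 := by
  have : Nontrivial V := not_subsingleton_iff_nontrivial.mp hnt
  obtain ⟨u, hu⟩ := exists_ne (0 : V)
  rw [finrank_eq_one_iff_of_nonzero u hu, Submodule.eq_top_iff']
  intro v
  obtain ⟨f, hf⟩ := exists_dual_fun' (K := K) hu
  obtain ⟨c, hc⟩ := h (LinearMap.toSpanSingleton K V v ∘ₗ f)
  have := congrArg (fun g => g u) (congrArg DFunLike.coe hc)
  simp only [LinearMap.comp_apply, hf, LinearMap.toSpanSingleton_apply, one_smul,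
    LinearMap.smul_apply, LinearMap.id_apply] at this
  rw [Submodule.mem_span_singleton]
  exact ⟨c, this.symm⟩

lemma isHom_id (X : GamRep K k) : X.IsHom X LinearMap.id LinearMap.id :=
  ⟨(LinearMap.id_comp _).trans (LinearMap.comp_id _).symm,
   (LinearMap.id_comp _).trans (LinearMap.comp_id _).symm,
   (LinearMap.id_comp _).trans (LinearMap.comp_id _).symm⟩

lemma scalar (X : GamRep K k) (h : Module.finrank K X.endSpace = 1) :
    ∀ φ1 φ2, X.IsHom X φ1 φ2 →
      ∃ c : K, φ1 = c • LinearMap.id ∧ φ2 = c • LinearMap.id := by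
  set e : X.endSpace := ⟨(LinearMap.id, LinearMap.id), X.isHom_id⟩ with he_def
  have he : e ≠ 0 := by
    intro h0
    have h1 : (LinearMap.id : X.V1 →ₗ[K] X.V1) = 0 :=
      congrArg Prod.fst (congrArg Subtype.val h0)
    have h2 : (LinearMap.id : X.V2 →ₗ[K] X.V2) = 0 :=
      congrArg Prod.snd (congrArg Subtype.val h0)
    have s1 : Subsingleton X.V1 := ⟨fun a b => by
      have ha := congrArg (fun f => f a) (congrArg DFunLike.coe h1)
      have hb := congrArg (fun f => f b) (congrArg DFunLike.coe h1)
      simp only [LinearMap.id_coe, id_eq, LinearMap.zero_apply] at ha hb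
      rw [ha, hb]⟩
    have s2 : Subsingleton X.V2 := ⟨fun a b => by
      have ha := congrArg (fun f => f a) (congrArg DFunLike.coe h2)
      have hb := congrArg (fun f => f b) (congrArg DFunLike.coe h2)
      simp only [LinearMap.id_coe, id_eq, LinearMap.zero_apply] at ha hb
      rw [ha, hb]⟩
    have : Subsingleton ((X.V1 →ₗ[K] X.V1) × (X.V2 →ₗ[K] X.V2)) := by
      have := LinearMap.uniqueOfRight (M := X.V1) (M₂ := X.V1) (σ₁₂ := RingHom.id K)
      have := LinearMap.uniqueOfRight (M := X.V2) (M₂ := X.V2) (σ₁₂ := RingHom.id K)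
      infer_instance
    have : Subsingleton X.endSpace := ⟨fun a b => Subtype.ext (Subsingleton.elim _ _)⟩
    rw [finrank_zero_of_subsingleton] at h
    exact one_ne_zero h.symm
  have hsp := (finrank_eq_one_iff_of_nonzero e he).mp h
  intro φ1 φ2 hhom
  have hmem : (⟨(φ1, φ2), hhom⟩ : X.endSpace) ∈ Submodule.span K {e} := by
    rw [hsp]; exact Submodule.mem_top
  obtain ⟨c, hc⟩ := Submodule.mem_span_singleton.mp hmem
  have hc' : c • ((LinearMap.id : X.V1 →ₗ[K] X.V1), (LinearMap.id : X.V2 →ₗ[K] X.V2))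
      = (φ1, φ2) := congrArg Subtype.val hc
  exact ⟨c, (congrArg Prod.fst hc').symm, (congrArg Prod.snd hc').symm⟩

lemma subsingleton_equiv_absurd {V : Type} [AddCommGroup V] [Module K V]
    (hs : Subsingleton V) (e : V ≃ₗ[K] K) : False := by
  obtain ⟨x, hx⟩ := e.surjective 1
  rw [Subsingleton.elim x 0, map_zero] at hx
  exact zero_ne_one hx

end GamRep

namespace GamRep

variable {K : Type} [Field K] {k : ℕ}

lemma iso_S1 (hk : 1 ≤ k) (X : GamRep K k) (hs2 : Subsingleton X.V2)
    (hr : finrank K X.V1 = 1) : X.Iso (S1 K hk) := by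
  haveI := hs2
  haveI : Subsingleton (S1 K hk).V2 := inferInstanceAs (Subsingleton PUnit)
  obtain ⟨φ1⟩ := FiniteDimensional.nonempty_linearEquiv_of_finrank_eq
    (M := X.V1) (M' := K) (by rw [hr, finrank_self])
  exact ⟨φ1, LinearEquiv.ofSubsingleton X.V2 PUnit,
    Subsingleton.elim _ _, Subsingleton.elim _ _, Subsingleton.elim _ _⟩

lemma iso_S2 (hk : 1 ≤ k) (X : GamRep K k) (hs1 : Subsingleton X.V1)
    (hη : X.η = 0) (hr : finrank K X.V2 = 1) : X.Iso (S2 K hk) := by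
  haveI := hs1
  haveI : Subsingleton (S2 K hk).V1 := inferInstanceAs (Subsingleton PUnit)
  obtain ⟨φ2⟩ := FiniteDimensional.nonempty_linearEquiv_of_finrank_eq
    (M := X.V2) (M' := K) (by rw [hr, finrank_self])
  refine ⟨LinearEquiv.ofSubsingleton X.V1 PUnit, φ2,
    Subsingleton.elim _ _, Subsingleton.elim _ _, ?_⟩
  rw [hη, show (S2 K hk).η = 0 from rfl, LinearMap.comp_zero, LinearMap.zero_comp]

lemma iso_M1 (hk : 1 ≤ k) (X : GamRep K k) (hb : Function.Bijective X.α)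
    (hβ : X.β = 0) (hη : X.η = 0) (hr : finrank K X.V1 = 1) : X.Iso (M1 K hk) := by
  obtain ⟨φ1⟩ := FiniteDimensional.nonempty_linearEquiv_of_finrank_eq
    (M := X.V1) (M' := K) (by rw [hr, finrank_self])
  set e : X.V1 ≃ₗ[K] X.V2 := LinearEquiv.ofBijective X.α hb with he
  refine ⟨φ1, e.symm.trans φ1, ?_, ?_, ?_⟩
  · ext x
    show φ1 (e.symm (X.α x)) = (M1 K hk).α (φ1 x)
    rw [show (M1 K hk).α = LinearMap.id from rfl]
    have : X.α x = e x := rfl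
    rw [this, e.symm_apply_apply]
    rfl
  · rw [hβ, show (M1 K hk).β = 0 from rfl, LinearMap.comp_zero, LinearMap.zero_comp]
  · rw [hη, show (M1 K hk).η = 0 from rfl, LinearMap.comp_zero, LinearMap.zero_comp]

lemma iso_M2 (hk : 1 ≤ k) (X : GamRep K k) (hb : Function.Bijective X.β)
    (hα : X.α = 0) (hη : X.η = 0) (hr : finrank K X.V2 = 1) : X.Iso (M2 K hk) := by
  obtain ⟨φ2⟩ := FiniteDimensional.nonempty_linearEquiv_of_finrank_eq
    (M := X.V2) (M' := K) (by rw [hr, finrank_self])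
  set e : X.V2 ≃ₗ[K] X.V1 := LinearEquiv.ofBijective X.β hb with he
  refine ⟨e.symm.trans φ2, φ2, ?_, ?_, ?_⟩
  · rw [hα, show (M2 K hk).α = 0 from rfl, LinearMap.comp_zero, LinearMap.zero_comp]
  · ext x
    show φ2 (e.symm (X.β x)) = (M2 K hk).β (φ2 x)
    rw [show (M2 K hk).β = LinearMap.id from rfl]
    have : X.β x = e x := rfl
    rw [this, e.symm_apply_apply]
    rfl
  · rw [hη, show (M2 K hk).η = 0 from rfl, LinearMap.comp_zero, LinearMap.zero_comp]

end GamRep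

namespace GamRep

variable {K : Type} [Field K] {k : ℕ}

lemma smul_id_zero {V : Type} [AddCommGroup V] [Module K V] [Nontrivial V] {c : K}
    (h : c • (LinearMap.id : V →ₗ[K] V) = 0) : c = 0 := by
  obtain ⟨u, hu⟩ := exists_ne (0 : V)
  have := congrArg (fun f => f u) (congrArg DFunLike.coe h)
  simp only [LinearMap.smul_apply, LinearMap.id_apply, LinearMap.zero_apply] at this
  exact (smul_eq_zero.mp this).resolve_right hu

lemma subsingleton_of_equiv_punit {V : Type} [AddCommGroup V] [Module K V]
    (e : V ≃ₗ[K] PUnit) : Subsingleton V :=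
  ⟨fun a b => e.injective (Subsingleton.elim _ _)⟩

end GamRep

theorem gam_bricks' (K : Type) [Field K] (k : ℕ) (hk : 1 ≤ k)
    (X : GamRep K k) (h : Module.finrank K X.endSpace = 1) :
    ∃! i : Fin 4,
      X.Iso (![GamRep.S1 K hk, GamRep.S2 K hk, GamRep.M1 K hk, GamRep.M2 K hk] i) := by
  classical
  have hscal := X.scalar h
  have r2 : ∀ v, X.η (X.α v) = 0 := fun v => by
    simpa using LinearMap.congr_fun X.rel2 v
  have r3 : ∀ v, X.β (X.η v) = 0 := fun v => by
    simpa using LinearMap.congr_fun X.rel3 v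
  by_cases s2 : Subsingleton X.V2
  · by_cases s1 : Subsingleton X.V1
    · exfalso
      haveI := s1; haveI := s2
      haveI : Subsingleton X.endSpace := ⟨fun a b => Subtype.ext (Subsingleton.elim _ _)⟩
      rw [finrank_zero_of_subsingleton] at h
      exact one_ne_zero h.symm
    · -- S1 case
      haveI := s2
      have hall : ∀ φ1 : X.V1 →ₗ[K] X.V1, ∃ c : K, φ1 = c • LinearMap.id := by
        intro φ1
        obtain ⟨c, hc, -⟩ := hscal φ1 0
          ⟨Subsingleton.elim _ _, Subsingleton.elim _ _, Subsingleton.elim _ _⟩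
        exact ⟨c, hc⟩
      have hr := GamRep.finrank_one_of_scalar s1 hall
      refine ⟨0, GamRep.iso_S1 hk X s2 hr, ?_⟩
      intro j hj
      fin_cases j
      · rfl
      · obtain ⟨φ1, -⟩ := (show X.Iso (GamRep.S2 K hk) from hj)
        exact absurd (GamRep.subsingleton_of_equiv_punit φ1) s1
      · obtain ⟨-, φ2, -⟩ := (show X.Iso (GamRep.M1 K hk) from hj)
        exact (GamRep.subsingleton_equiv_absurd s2 φ2).elim
      · obtain ⟨-, φ2, -⟩ := (show X.Iso (GamRep.M2 K hk) from hj)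
        exact (GamRep.subsingleton_equiv_absurd s2 φ2).elim
  · by_cases s1 : Subsingleton X.V1
    · -- S2 case
      haveI := s1
      haveI hnt2 : Nontrivial X.V2 := not_subsingleton_iff_nontrivial.mp s2
      have hα : X.α = 0 := Subsingleton.elim _ _
      have hβ : X.β = 0 := Subsingleton.elim _ _
      obtain ⟨c, -, hc2⟩ := hscal 0 X.η
        ⟨by rw [X.rel2, LinearMap.comp_zero],
         by rw [X.rel3, LinearMap.zero_comp], rfl⟩
      have hηk : X.η ^ k = 0 := by
        rw [← X.rel1, hα, LinearMap.zero_comp]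
      have hck : c ^ k = 0 := by
        have : X.η ^ k = c ^ k • LinearMap.id := by
          rw [hc2, smul_pow]; congr 1; exact one_pow k
        rw [hηk] at this
        exact GamRep.smul_id_zero this.symm
      have hc0 : c = 0 := pow_eq_zero_iff (Nat.one_le_iff_ne_zero.mp hk) |>.mp hck
      have hη : X.η = 0 := by rw [hc2, hc0, zero_smul]
      have hall : ∀ φ2 : X.V2 →ₗ[K] X.V2, ∃ c : K, φ2 = c • LinearMap.id := by
        intro φ2
        obtain ⟨c, -, hc⟩ := hscal 0 φ2
          ⟨by rw [hα, LinearMap.comp_zero, LinearMap.comp_zero],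
           by rw [hβ, LinearMap.zero_comp, LinearMap.zero_comp],
           by rw [hη, LinearMap.comp_zero, LinearMap.zero_comp]⟩
        exact ⟨c, hc⟩
      have hr := GamRep.finrank_one_of_scalar s2 hall
      refine ⟨1, GamRep.iso_S2 hk X s1 hη hr, ?_⟩
      intro j hj
      fin_cases j
      · obtain ⟨φ1, -⟩ := (show X.Iso (GamRep.S1 K hk) from hj)
        exact (GamRep.subsingleton_equiv_absurd s1 φ1).elim
      · rfl
      · obtain ⟨φ1, -⟩ := (show X.Iso (GamRep.M1 K hk) from hj)
        exact (GamRep.subsingleton_equiv_absurd s1 φ1).elim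
      · obtain ⟨φ1, -⟩ := (show X.Iso (GamRep.M2 K hk) from hj)
        exact (GamRep.subsingleton_equiv_absurd s1 φ1).elim
    · -- main case
      haveI hnt1 : Nontrivial X.V1 := not_subsingleton_iff_nontrivial.mp s1
      haveI hnt2 : Nontrivial X.V2 := not_subsingleton_iff_nontrivial.mp s2
      -- η = 0
      obtain ⟨c, hc1, hc2⟩ := hscal 0 X.η
        ⟨by rw [X.rel2, LinearMap.comp_zero],
         by rw [X.rel3, LinearMap.zero_comp], rfl⟩
      have hη : X.η = 0 := by rw [hc2, GamRep.smul_id_zero hc1.symm, zero_smul]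
      have hη' : ∀ v, X.η v = 0 := fun v => by rw [hη]; rfl
      have hαβ : X.α ∘ₗ X.β = 0 := by
        rw [X.rel1, hη, zero_pow (Nat.one_le_iff_ne_zero.mp hk)]
      have hαβ' : ∀ v, X.α (X.β v) = 0 := fun v => by
        simpa using LinearMap.congr_fun hαβ v
      have hβα : X.β ∘ₗ X.α = 0 := by
        obtain ⟨c, hc1, hc2⟩ := hscal (X.β ∘ₗ X.α) 0
          ⟨LinearMap.ext fun v => by simp [hαβ'],
           LinearMap.ext fun v => by simp [hαβ'],
           LinearMap.ext fun v => by simp [hη']⟩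
        rw [hc1, GamRep.smul_id_zero hc2.symm, zero_smul]
      have hβα' : ∀ v, X.β (X.α v) = 0 := fun v => by
        simpa using LinearMap.congr_fun hβα v
      -- facts
      have fact_a : ∀ ψ : X.V2 →ₗ[K] X.V1, ψ ∘ₗ X.α = 0 → X.α ∘ₗ ψ = 0 := by
        intro ψ hψ
        have hψ' : ∀ v, ψ (X.α v) = 0 := fun v => by
          simpa using LinearMap.congr_fun hψ v
        obtain ⟨c, hc1, hc2⟩ := hscal 0 (X.α ∘ₗ ψ)
          ⟨LinearMap.ext fun v => by simp [hψ'],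
           LinearMap.ext fun v => by simp [hβα'],
           LinearMap.ext fun v => by simp [hη']⟩
        rw [hc2, GamRep.smul_id_zero hc1.symm, zero_smul]
      have fact_b : ∀ ψ : X.V2 →ₗ[K] X.V1, X.α ∘ₗ ψ = 0 → ψ ∘ₗ X.α = 0 := by
        intro ψ hψ
        have hψ' : ∀ v, X.α (ψ v) = 0 := fun v => by
          simpa using LinearMap.congr_fun hψ v
        obtain ⟨c, hc1, hc2⟩ := hscal (ψ ∘ₗ X.α) 0
          ⟨LinearMap.ext fun v => by simp [hψ'],
           LinearMap.ext fun v => by simp [hαβ'],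
           LinearMap.ext fun v => by simp [hη']⟩
        rw [hc1, GamRep.smul_id_zero hc2.symm, zero_smul]
      have fact_a' : ∀ ψ : X.V1 →ₗ[K] X.V2, ψ ∘ₗ X.β = 0 → X.β ∘ₗ ψ = 0 := by
        intro ψ hψ
        have hψ' : ∀ v, ψ (X.β v) = 0 := fun v => by
          simpa using LinearMap.congr_fun hψ v
        obtain ⟨c, hc1, hc2⟩ := hscal (X.β ∘ₗ ψ) 0
          ⟨LinearMap.ext fun v => by simp [hαβ'],
           LinearMap.ext fun v => by simp [hψ'],
           LinearMap.ext fun v => by simp [hη']⟩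
        rw [hc1, GamRep.smul_id_zero hc2.symm, zero_smul]
      have fact_b' : ∀ ψ : X.V1 →ₗ[K] X.V2, X.β ∘ₗ ψ = 0 → ψ ∘ₗ X.β = 0 := by
        intro ψ hψ
        have hψ' : ∀ v, X.β (ψ v) = 0 := fun v => by
          simpa using LinearMap.congr_fun hψ v
        obtain ⟨c, hc1, hc2⟩ := hscal 0 (ψ ∘ₗ X.β)
          ⟨LinearMap.ext fun v => by simp [hβα'],
           LinearMap.ext fun v => by simp [hψ'],
           LinearMap.ext fun v => by simp [hη']⟩
        rw [hc2, GamRep.smul_id_zero hc1.symm, zero_smul]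
      -- dichotomy for α
      have hA : X.α = 0 ∨ Function.Bijective X.α := by
        by_cases hα0 : X.α = 0
        · exact Or.inl hα0
        right
        have hex : ∃ x, X.α x ≠ 0 := by
          by_contra hcon
          push_neg at hcon
          exact hα0 (LinearMap.ext fun v => by simpa using hcon v)
        obtain ⟨x, hx⟩ := hex
        constructor
        · rw [← LinearMap.ker_eq_bot] at *
          rw [LinearMap.ker_eq_bot']
          intro u hu
          by_contra hu0
          obtain ⟨f, hf⟩ := GamRep.exists_dual_fun' (K := K) hx
          have hαψ : X.α ∘ₗ (LinearMap.toSpanSingleton K X.V1 u ∘ₗ f) = 0 :=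
            LinearMap.ext fun v => by
              simp [LinearMap.toSpanSingleton_apply, map_smul, hu]
          have := LinearMap.congr_fun (fact_b _ hαψ) x
          simp [LinearMap.toSpanSingleton_apply, hf] at this
          exact hu0 this
        · intro w
          by_contra hw
          have hw' : w ∉ LinearMap.range X.α := by
            rw [LinearMap.mem_range]
            push_neg at hw ⊢
            exact fun y => hw y
          obtain ⟨f, hf0, hf1⟩ := GamRep.exists_dual_fun (LinearMap.range X.α) hw'
          have hψα : (LinearMap.toSpanSingleton K X.V1 x ∘ₗ f) ∘ₗ X.α = 0 :=
            LinearMap.ext fun v => by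
              simp [LinearMap.toSpanSingleton_apply,
                hf0 (X.α v) (LinearMap.mem_range_self _ v)]
          have := LinearMap.congr_fun (fact_a _ hψα) w
          simp [LinearMap.toSpanSingleton_apply, hf1] at this
          exact hx this
      -- dichotomy for β
      have hB : X.β = 0 ∨ Function.Bijective X.β := by
        by_cases hβ0 : X.β = 0
        · exact Or.inl hβ0
        right
        have hex : ∃ y, X.β y ≠ 0 := by
          by_contra hcon
          push_neg at hcon
          exact hβ0 (LinearMap.ext fun v => by simpa using hcon v)
        obtain ⟨y, hy⟩ := hex
        constructor
        · rw [← LinearMap.ker_eq_bot] at *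
          rw [LinearMap.ker_eq_bot']
          intro u hu
          by_contra hu0
          obtain ⟨f, hf⟩ := GamRep.exists_dual_fun' (K := K) hy
          have hβψ : X.β ∘ₗ (LinearMap.toSpanSingleton K X.V2 u ∘ₗ f) = 0 :=
            LinearMap.ext fun v => by
              simp [LinearMap.toSpanSingleton_apply, map_smul, hu]
          have := LinearMap.congr_fun (fact_b' _ hβψ) y
          simp [LinearMap.toSpanSingleton_apply, hf] at this
          exact hu0 this
        · intro w
          by_contra hw
          have hw' : w ∉ LinearMap.range X.β := by
            rw [LinearMap.mem_range]
            push_neg at hw ⊢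
            exact fun z => hw z
          obtain ⟨f, hf0, hf1⟩ := GamRep.exists_dual_fun (LinearMap.range X.β) hw'
          have hψβ : (LinearMap.toSpanSingleton K X.V2 y ∘ₗ f) ∘ₗ X.β = 0 :=
            LinearMap.ext fun v => by
              simp [LinearMap.toSpanSingleton_apply,
                hf0 (X.β v) (LinearMap.mem_range_self _ v)]
          have := LinearMap.congr_fun (fact_a' _ hψβ) w
          simp [LinearMap.toSpanSingleton_apply, hf1] at this
          exact hy this
      rcases hA with hα0 | hαb <;> rcases hB with hβ0 | hβb
      · -- both zero: contradiction
        exfalso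
        obtain ⟨c, hc1, hc2⟩ := hscal LinearMap.id 0
          ⟨LinearMap.ext fun v => by simp [hα0],
           LinearMap.ext fun v => by simp [hβ0],
           LinearMap.ext fun v => by simp⟩
        have hc0 : c = 0 := GamRep.smul_id_zero hc2.symm
        rw [hc0, zero_smul] at hc1
        obtain ⟨u, hu⟩ := exists_ne (0 : X.V1)
        exact hu (by simpa using LinearMap.congr_fun hc1 u)
      · -- α = 0, β bijective : M2
        have hall : ∀ φ2 : X.V2 →ₗ[K] X.V2, ∃ c : K, φ2 = c • LinearMap.id := by
          intro φ2
          set e : X.V2 ≃ₗ[K] X.V1 := LinearEquiv.ofBijective X.β hβb with he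
          obtain ⟨c, -, hc⟩ := hscal (X.β ∘ₗ φ2 ∘ₗ (e.symm : X.V1 →ₗ[K] X.V2)) φ2
            ⟨by rw [hα0, LinearMap.comp_zero, LinearMap.zero_comp],
             LinearMap.ext fun v => by
               have : X.β v = e v := rfl
               simp only [LinearMap.comp_apply, LinearEquiv.coe_coe, this,
                 LinearEquiv.symm_apply_apply],
             by rw [hη, LinearMap.comp_zero, LinearMap.zero_comp]⟩
          exact ⟨c, hc⟩
        have hr := GamRep.finrank_one_of_scalar s2 hall
        refine ⟨3, GamRep.iso_M2 hk X hβb hα0 hη hr, ?_⟩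
        intro j hj
        fin_cases j
        · obtain ⟨-, φ2, -⟩ := (show X.Iso (GamRep.S1 K hk) from hj)
          exact absurd (GamRep.subsingleton_of_equiv_punit φ2) s2
        · obtain ⟨φ1, -⟩ := (show X.Iso (GamRep.S2 K hk) from hj)
          exact absurd (GamRep.subsingleton_of_equiv_punit φ1) s1
        · exfalso
          obtain ⟨φ1, φ2, -, hcond2, -⟩ := (show X.Iso (GamRep.M1 K hk) from hj)
          -- φ1 ∘ₗ X.β = M1.β ∘ₗ φ2 = 0
          have hβ0 : ∀ v, X.β v = 0 := by
            intro v
            have := LinearMap.congr_fun hcond2 v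
            simp only [LinearMap.comp_apply, LinearEquiv.coe_coe] at this
            have h0 : ((GamRep.M1 K hk).β ∘ₗ (φ2 : X.V2 →ₗ[K] (GamRep.M1 K hk).V2)) v = 0 := by
              rw [show (GamRep.M1 K hk).β = 0 from rfl, LinearMap.zero_comp]; rfl
            rw [show ((GamRep.M1 K hk).β ∘ₗ (φ2 : X.V2 →ₗ[K] (GamRep.M1 K hk).V2)) v
                = (GamRep.M1 K hk).β (φ2 v) from rfl] at h0
            have : φ1 (X.β v) = 0 := by rw [this, h0]
            have := φ1.injective (by simpa using this : φ1 (X.β v) = φ1 0)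
            exact this
          obtain ⟨u, hu⟩ := exists_ne (0 : X.V1)
          obtain ⟨v, hv⟩ := hβb.2 u
          exact hu (by rw [← hv, hβ0])
        · rfl
      · -- α bijective, β = 0 : M1
        have hall : ∀ φ1 : X.V1 →ₗ[K] X.V1, ∃ c : K, φ1 = c • LinearMap.id := by
          intro φ1
          set e : X.V1 ≃ₗ[K] X.V2 := LinearEquiv.ofBijective X.α hαb with he
          obtain ⟨c, hc, -⟩ := hscal φ1 (X.α ∘ₗ φ1 ∘ₗ (e.symm : X.V2 →ₗ[K] X.V1))
            ⟨LinearMap.ext fun v => by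
               have : X.α v = e v := rfl
               simp only [LinearMap.comp_apply, LinearEquiv.coe_coe, this,
                 LinearEquiv.symm_apply_apply],
             by rw [hβ0, LinearMap.comp_zero, LinearMap.zero_comp],
             by rw [hη, LinearMap.comp_zero, LinearMap.zero_comp]⟩
          exact ⟨c, hc⟩
        have hr := GamRep.finrank_one_of_scalar s1 hall
        refine ⟨2, GamRep.iso_M1 hk X hαb hβ0 hη hr, ?_⟩
        intro j hj
        fin_cases j
        · obtain ⟨-, φ2, -⟩ := (show X.Iso (GamRep.S1 K hk) from hj)
          exact absurd (GamRep.subsingleton_of_equiv_punit φ2) s2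
        · obtain ⟨φ1, -⟩ := (show X.Iso (GamRep.S2 K hk) from hj)
          exact absurd (GamRep.subsingleton_of_equiv_punit φ1) s1
        · rfl
        · exfalso
          obtain ⟨φ1, φ2, hcond1, -, -⟩ := (show X.Iso (GamRep.M2 K hk) from hj)
          -- φ2 ∘ₗ X.α = M2.α ∘ₗ φ1 = 0
          have hα0 : ∀ v, X.α v = 0 := by
            intro v
            have := LinearMap.congr_fun hcond1 v
            simp only [LinearMap.comp_apply, LinearEquiv.coe_coe] at this
            have h0 : (GamRep.M2 K hk).α (φ1 v) = 0 := rfl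
            have : φ2 (X.α v) = 0 := by rw [this, h0]
            exact φ2.injective (by simpa using this : φ2 (X.α v) = φ2 0)
          obtain ⟨u, hu⟩ := exists_ne (0 : X.V2)
          obtain ⟨v, hv⟩ := hαb.2 u
          exact hu (by rw [← hv, hα0])
      · -- both bijective: contradiction
        exfalso
        obtain ⟨v, hv⟩ := exists_ne (0 : X.V2)
        have h1 : X.α (X.β v) = X.α 0 := by simpa using hαβ' v
        have h2 : X.β v = 0 := hαb.1 h1
        have h3 : X.β v = X.β 0 := by simpa using h2
        exact hv (hβb.1 h3)


/-- If a finite-dimensional `Γ_con`-module `X` has a one-dimensional endomorphism space,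
then `X` is isomorphic to exactly one of the four modules `S₁ = (K, 0)`, `S₂ = (0, K)`,
`M₁ = (K, K, α = id, β = 0, η = 0)`, `M₂ = (K, K, α = 0, β = id, η = 0)`.  In particular
`Γ_con` has exactly four bricks. -/
theorem gam_bricks (K : Type) [Field K] [IsAlgClosed K] (k : ℕ) (hk : 1 ≤ k)
    (X : GamRep K k) (h : Module.finrank K X.endSpace = 1) :
    ∃! i : Fin 4,
      X.Iso (![GamRep.S1 K hk, GamRep.S2 K hk, GamRep.M1 K hk, GamRep.M2 K hk] i) :=
  gam_bricks' K k hk X h
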